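/- Let M1 be the number of lattice paths in Cat(n) (paths from (0,0) to (n,n) weakly above the diagonal) containing the horizontal segment from (x-2,h) to (x,h), and M2 the number containing the vertical segment from (x-1,h-1) to (x-1,h+1), where x := h+1-z with 1 ≤ z ≤ h-1 and 1 ≤ h ≤ n-1. Then M2 - M1 = C(x+h-2, x-1) · C(2n-x-h, n-h-1) · (h-x+1)(h-x+2)(h-x+3)(n-x-h+1) / (h(h+1)(n-h)(n-x+2)). -/

import Mathlib

open Finset

/-- Number of steps equal to `v` among the first `i` steps of `f`
(`false` = right-step, `true` = up-step). -/
def pref {m : ℕ} (f : Fin m → Bool) (i : ℕ) (v : Bool) : ℕ :=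
  (univ.filter (fun j : Fin m => (j : ℕ) < i ∧ f j = v)).card

/-- `f` encodes a lattice path from `(0,0)` to `(a,b)` (with `false` = right-step,
`true` = up-step) that stays weakly above the diagonal `y = x`. -/
def IsPath (a b : ℕ) (f : Fin (a + b) → Bool) : Prop :=
  pref f (a + b) false = a ∧ ∀ i ≤ a + b, pref f i false ≤ pref f i true

instance (a b : ℕ) : DecidablePred (IsPath a b) := fun f => by
  unfold IsPath; exact inferInstance

/-- The number of lattice paths from `(0,0)` to `(a,b)` staying weakly above `y = x`. -/
def pathCount (a b : ℕ) : ℕ := (univ.filter (IsPath a b)).card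

/-- The number of paths in `Cat(n)` containing the horizontal segment
`(x-2,h) → (x,h)`, i.e. passing through `(x-2,h)`, `(x-1,h)`, `(x,h)`. -/
def Mone (n x h : ℕ) : ℕ :=
  (univ.filter (fun f : Fin (n + n) → Bool => IsPath n n f ∧
    pref f (x + h - 2) false = x - 2 ∧ pref f (x + h - 1) false = x - 1 ∧
    pref f (x + h) false = x)).card

/-- The number of paths in `Cat(n)` containing the vertical segment
`(x-1,h-1) → (x-1,h+1)`, i.e. passing through `(x-1,h-1)`, `(x-1,h)`, `(x-1,h+1)`. -/
def Mtwo (n x h : ℕ) : ℕ :=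
  (univ.filter (fun f : Fin (n + n) → Bool => IsPath n n f ∧
    pref f (x + h - 2) false = x - 1 ∧ pref f (x + h - 1) false = x - 1 ∧
    pref f (x + h) false = x - 1)).card

lemma pref_eq_sum {m : ℕ} (f : Fin m → Bool) (i : ℕ) (v : Bool) :
    pref f i v = ∑ j : Fin m, if (j : ℕ) < i ∧ f j = v then 1 else 0 := by
  rw [pref, card_filter]

lemma pref_zero {m : ℕ} (f : Fin m → Bool) (v : Bool) : pref f 0 v = 0 := by
  simp [pref]

lemma pref_succ {m : ℕ} (f : Fin m → Bool) (i : ℕ) (v : Bool) :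
    pref f (i + 1) v = pref f i v +
      (if h : i < m then (if f ⟨i, h⟩ = v then 1 else 0) else 0) := by
  rw [pref_eq_sum, pref_eq_sum]
  have h1 : ∀ j : Fin m, (if (j : ℕ) < i + 1 ∧ f j = v then 1 else 0) =
      (if (j : ℕ) < i ∧ f j = v then 1 else 0) +
      (if (j : ℕ) = i ∧ f j = v then 1 else 0) := by
    intro j
    by_cases hv : f j = v
    · simp only [hv, and_true]; split_ifs <;> omega
    · simp [hv]
  rw [Finset.sum_congr rfl (fun j _ => h1 j), Finset.sum_add_distrib]
  congr 1
  by_cases h : i < m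
  · rw [dif_pos h, Finset.sum_eq_single (⟨i, h⟩ : Fin m)]
    · simp
    · intro j _ hj
      have : (j : ℕ) ≠ i := fun hh => hj (Fin.ext hh)
      simp [this]
    · simp
  · rw [dif_neg h]
    apply Finset.sum_eq_zero
    intro j _
    have : (j : ℕ) ≠ i := by have := j.isLt; omega
    simp [this]

lemma pref_le {m : ℕ} (f : Fin m → Bool) (i : ℕ) (v : Bool) : pref f i v ≤ i := by
  induction i with
  | zero => simp [pref_zero]
  | succ k ih =>
    rw [pref_succ]
    split_ifs <;> omega

lemma pref_add {m : ℕ} (f : Fin m → Bool) (i : ℕ) (hi : i ≤ m) :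
    pref f i false + pref f i true = i := by
  induction i with
  | zero => simp [pref_zero]
  | succ k ih =>
    have hk : k < m := hi
    rw [pref_succ, pref_succ]
    simp only [dif_pos hk]
    have hih := ih (le_of_lt hk)
    cases hfk : f ⟨k, hk⟩ <;> simp [hfk] <;> omega

lemma pref_mono {m : ℕ} (f : Fin m → Bool) (v : Bool) {i i' : ℕ} (h : i ≤ i') :
    pref f i v ≤ pref f i' v := by
  apply Finset.card_le_card
  intro j hj
  simp only [mem_filter] at *
  exact ⟨hj.1, by omega, hj.2.2⟩

lemma pref_cast {m1 m2 : ℕ} (h : m1 = m2) (f : Fin m2 → Bool) (i : ℕ) (v : Bool) :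
    pref (fun j : Fin m1 => f (Fin.cast h j)) i v = pref f i v := by
  rw [pref_eq_sum, pref_eq_sum]
  exact Fintype.sum_equiv (finCongr h) _ _ (fun j => rfl)

lemma pref_left {p q : ℕ} (f : Fin (p + q) → Bool) (v : Bool) :
    ∀ i, i ≤ p → pref (fun j : Fin p => f (Fin.castAdd q j)) i v = pref f i v := by
  intro i hi
  induction i with
  | zero => simp [pref_zero]
  | succ k ih =>
    have hk : k < p := hi
    rw [pref_succ, pref_succ, dif_pos hk, dif_pos (show k < p + q by omega),
      ih (le_of_lt hk)]
    rfl

lemma pref_right {p q : ℕ} (f : Fin (p + q) → Bool) (v : Bool) (i : ℕ) :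
    pref f (p + i) v = pref f p v + pref (fun j : Fin q => f (Fin.natAdd p j)) i v := by
  induction i with
  | zero => simp [pref_zero]
  | succ k ih =>
    rw [← Nat.add_assoc, pref_succ, pref_succ, ih]
    by_cases hk : k < q
    · rw [dif_pos hk, dif_pos (show p + k < p + q by omega)]
      have he : f ⟨p + k, by omega⟩ = f (Fin.natAdd p ⟨k, hk⟩) := rfl
      rw [he]
      omega
    · rw [dif_neg hk, dif_neg (show ¬ p + k < p + q by omega)]
      omega

lemma card_cast {m1 m2 : ℕ} (h : m1 = m2) (Q : (Fin m2 → Bool) → Prop) [DecidablePred Q] :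
    (univ.filter Q).card =
      (univ.filter (fun f : Fin m1 → Bool => Q (fun j => f (Fin.cast h.symm j)))).card := by
  refine Finset.card_nbij' (fun g => (fun j : Fin m1 => g (Fin.cast h j)))
    (fun g => (fun j : Fin m2 => g (Fin.cast h.symm j))) ?_ ?_ ?_ ?_
  · intro g hg
    simp only [mem_coe, mem_filter, mem_univ, true_and] at *
    have he : (fun j : Fin m2 => g (Fin.cast h (Fin.cast h.symm j))) = g :=
      funext fun j => congrArg g (Fin.ext rfl)
    rw [he]; exact hg
  · intro g hg
    simp only [mem_coe, mem_filter, mem_univ, true_and] at *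
    exact hg
  · intro g _
    exact funext fun j => congrArg g (Fin.ext rfl)
  · intro g _
    exact funext fun j => congrArg g (Fin.ext rfl)

lemma card_split {p q : ℕ} (Q : (Fin (p + q) → Bool) → Prop) [DecidablePred Q]
    (Q1 : (Fin p → Bool) → Prop) [DecidablePred Q1]
    (Q2 : (Fin q → Bool) → Prop) [DecidablePred Q2]
    (hQ : ∀ f, Q f ↔ Q1 (fun j => f (Fin.castAdd q j)) ∧ Q2 (fun j => f (Fin.natAdd p j))) :
    (univ.filter Q).card = (univ.filter Q1).card * (univ.filter Q2).card := by
  rw [← Finset.card_product]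
  have hprod : (univ.filter Q1) ×ˢ (univ.filter Q2) =
      univ.filter (fun g : (Fin p → Bool) × (Fin q → Bool) => Q1 g.1 ∧ Q2 g.2) := by
    ext g
    simp [Finset.mem_product]
  rw [hprod]
  apply Finset.card_equiv
    ((Equiv.arrowCongr (finSumFinEquiv (m := p) (n := q)).symm (Equiv.refl Bool)).trans
      (Equiv.sumArrowEquivProdArrow _ _ _))
  intro f
  simp only [mem_filter, mem_univ, true_and, Equiv.trans_apply, Equiv.arrowCongr_apply,
    Equiv.sumArrowEquivProdArrow_apply_fst, Equiv.sumArrowEquivProdArrow_apply_snd]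
  rw [hQ f]
  constructor
  · rintro ⟨h1, h2⟩
    constructor
    · convert h1 using 2; simp
    · convert h2 using 2; simp
  · rintro ⟨h1, h2⟩
    constructor
    · convert h1 using 2; simp
    · convert h2 using 2; simp

def IsPathC (a b c : ℕ) (f : Fin (a + b) → Bool) : Prop :=
  pref f (a + b) false = a ∧ ∀ i ≤ a + b, pref f i false ≤ pref f i true + c

instance (a b c : ℕ) : DecidablePred (IsPathC a b c) := fun f => by
  unfold IsPathC; exact inferInstance

def Pc (a b c : ℕ) : ℕ := (univ.filter (IsPathC a b c)).card

lemma Pc_a0 (b c : ℕ) : Pc 0 b c = 1 := by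
  rw [Pc, Finset.card_eq_one]
  refine ⟨fun _ => true, ?_⟩
  ext f
  simp only [mem_filter, mem_univ, true_and, mem_singleton]
  constructor
  · intro hP
    funext j
    have hend := hP.1
    by_contra hj
    have hj' : f j = false := by revert hj; cases f j <;> simp
    have hpos : 0 < pref f (0 + b) false := by
      rw [pref]
      apply Finset.card_pos.mpr
      exact ⟨j, Finset.mem_filter.mpr ⟨mem_univ _, j.isLt, hj'⟩⟩
    omega
  · intro hf
    subst hf
    refine ⟨by simp [pref], ?_⟩
    intro i hi
    simp [pref]

lemma Pc_b0 (a c : ℕ) (h : a ≤ c) : Pc a 0 c = 1 := by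
  rw [Pc, Finset.card_eq_one]
  refine ⟨fun _ => false, ?_⟩
  ext f
  simp only [mem_filter, mem_univ, true_and, mem_singleton]
  constructor
  · intro hP
    funext j
    have hend := hP.1
    by_contra hj
    have hj' : f j = true := by revert hj; cases f j <;> simp
    have htrue : 0 < pref f (a + 0) true := by
      rw [pref]
      apply Finset.card_pos.mpr
      exact ⟨j, Finset.mem_filter.mpr ⟨mem_univ _, j.isLt, hj'⟩⟩
    have := pref_add f (a + 0) le_rfl
    omega
  · intro hf
    subst hf
    have h3 : ∀ i, pref (fun _ : Fin (a + 0) => false) i true = 0 := by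
      intro i; simp [pref]
    have hall : ∀ i, i ≤ a + 0 → pref (fun _ : Fin (a + 0) => false) i false = i := by
      intro i hi
      have h2 := pref_add (fun _ : Fin (a + 0) => false) i hi
      have := h3 i
      omega
    refine ⟨hall _ le_rfl, ?_⟩
    intro i hi
    rw [hall i hi, h3 i]
    omega

lemma step_false (a b c : ℕ) :
    (univ.filter (fun f : Fin ((a + 1) + (b + 1)) → Bool =>
      IsPathC (a + 1) (b + 1) (c + 1) f ∧ pref f 1 false = 1)).card = Pc a (b + 1) c := by
  have hm : 1 + (a + (b + 1)) = (a + 1) + (b + 1) := by omega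
  rw [card_cast hm]
  refine (card_split _ (fun g : Fin 1 → Bool => pref g 1 false = 1)
      (IsPathC a (b + 1) c) ?_).trans ?_
  · intro f
    simp only [IsPathC, pref_cast]
    have hL : ∀ v, pref (fun j : Fin 1 => f (Fin.castAdd (a + (b + 1)) j)) 1 v = pref f 1 v :=
      fun v => pref_left f v 1 le_rfl
    have hR : ∀ i v, pref f (1 + i) v =
        pref f 1 v + pref (fun j : Fin (a + (b + 1)) => f (Fin.natAdd 1 j)) i v :=
      fun i v => pref_right f v i
    constructor
    · rintro ⟨⟨hend, hbal⟩, h1f⟩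
      have h1t : pref f 1 true = 0 := by
        have := pref_add f 1 (by omega); omega
      refine ⟨by rw [hL]; exact h1f, ?_, ?_⟩
      · rw [show (a + 1) + (b + 1) = 1 + (a + (b + 1)) by omega, hR] at hend
        omega
      · intro i hi
        have hb := hbal (1 + i) (by omega)
        rw [hR i false, hR i true] at hb
        omega
    · rintro ⟨h1, hend, hbal⟩
      rw [hL] at h1
      have h1t : pref f 1 true = 0 := by
        have := pref_add f 1 (by omega); omega
      refine ⟨⟨?_, ?_⟩, h1⟩
      · rw [show (a + 1) + (b + 1) = 1 + (a + (b + 1)) by omega, hR]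
        omega
      · intro i hi
        rcases i with _ | j
        · simp [pref_zero]
        · rw [show j + 1 = 1 + j by omega, hR j false, hR j true]
          have := hbal j (by omega)
          omega
  · have h1 : (univ.filter (fun g : Fin 1 → Bool => pref g 1 false = 1)).card = 1 := by decide
    rw [h1, one_mul, Pc]

lemma step_false0 (a b : ℕ) :
    (univ.filter (fun f : Fin ((a + 1) + (b + 1)) → Bool =>
      IsPathC (a + 1) (b + 1) 0 f ∧ pref f 1 false = 1)).card = 0 := by
  rw [Finset.card_eq_zero, Finset.filter_eq_empty_iff]
  intro f _
  intro hP
  have hbal := hP.1.2 1 (by omega)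
  have h1f := hP.2
  have := pref_add f 1 (by omega)
  omega

lemma step_true (a b c : ℕ) :
    (univ.filter (fun f : Fin ((a + 1) + (b + 1)) → Bool =>
      IsPathC (a + 1) (b + 1) c f ∧ ¬ pref f 1 false = 1)).card = Pc (a + 1) b (c + 1) := by
  have hm : 1 + ((a + 1) + b) = (a + 1) + (b + 1) := by omega
  rw [card_cast hm]
  refine (card_split _ (fun g : Fin 1 → Bool => ¬ pref g 1 false = 1)
      (IsPathC (a + 1) b (c + 1)) ?_).trans ?_
  · intro f
    simp only [IsPathC, pref_cast]
    have hL : ∀ v, pref (fun j : Fin 1 => f (Fin.castAdd ((a + 1) + b) j)) 1 v = pref f 1 v :=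
      fun v => pref_left f v 1 le_rfl
    have hR : ∀ i v, pref f (1 + i) v =
        pref f 1 v + pref (fun j : Fin ((a + 1) + b) => f (Fin.natAdd 1 j)) i v :=
      fun i v => pref_right f v i
    constructor
    · rintro ⟨⟨hend, hbal⟩, h1f⟩
      have h1f0 : pref f 1 false = 0 := by
        have := pref_le f 1 false; omega
      have h1t : pref f 1 true = 1 := by
        have := pref_add f 1 (by omega); omega
      refine ⟨by rw [hL]; exact h1f, ?_, ?_⟩
      · rw [show (a + 1) + (b + 1) = 1 + ((a + 1) + b) by omega, hR] at hend
        omega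
      · intro i hi
        have hb := hbal (1 + i) (by omega)
        rw [hR i false, hR i true] at hb
        omega
    · rintro ⟨h1, hend, hbal⟩
      rw [hL] at h1
      have h1f0 : pref f 1 false = 0 := by
        have := pref_le f 1 false; omega
      have h1t : pref f 1 true = 1 := by
        have := pref_add f 1 (by omega); omega
      refine ⟨⟨?_, ?_⟩, h1⟩
      · rw [show (a + 1) + (b + 1) = 1 + ((a + 1) + b) by omega, hR]
        omega
      · intro i hi
        rcases i with _ | j
        · simp [pref_zero]
        · rw [show j + 1 = 1 + j by omega, hR j false, hR j true]
          have := hbal j (by omega)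
          omega
  · have h1 : (univ.filter (fun g : Fin 1 → Bool => ¬ pref g 1 false = 1)).card = 1 := by decide
    rw [h1, one_mul, Pc]

lemma Pc_rec0 (a b : ℕ) : Pc (a + 1) (b + 1) 0 = Pc (a + 1) b 1 := by
  have hsplit := Finset.card_filter_add_card_filter_not
    (s := (univ : Finset (Fin ((a + 1) + (b + 1)) → Bool)).filter (IsPathC (a + 1) (b + 1) 0))
    (p := fun f => pref f 1 false = 1)
  rw [Finset.filter_filter, Finset.filter_filter] at hsplit
  rw [Pc, ← hsplit, step_false0, step_true]
  simp

lemma Pc_recS (a b c : ℕ) :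
    Pc (a + 1) (b + 1) (c + 1) = Pc a (b + 1) c + Pc (a + 1) b (c + 2) := by
  have hsplit := Finset.card_filter_add_card_filter_not
    (s := (univ : Finset (Fin ((a + 1) + (b + 1)) → Bool)).filter (IsPathC (a + 1) (b + 1) (c + 1)))
    (p := fun f => pref f 1 false = 1)
  rw [Finset.filter_filter, Finset.filter_filter] at hsplit
  rw [Pc, ← hsplit, step_false, step_true]

lemma Pc_closed' : ∀ s, ∀ a b c : ℕ, a + b = s → a ≤ b + c →
    Pc a b c + (a + b).choose (b + c + 1) = (a + b).choose a := by
  intro s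
  induction s using Nat.strong_induction_on with
  | _ s ih =>
    intro a b c hs h
    match a, b with
    | 0, b =>
      rw [Pc_a0]
      rw [Nat.choose_eq_zero_of_lt (by omega), Nat.choose_zero_right]
    | a + 1, 0 =>
      rw [Pc_b0 _ _ (by omega)]
      rw [Nat.choose_eq_zero_of_lt (by omega)]
      rw [show (a + 1 + 0) = a + 1 by omega, Nat.choose_self]
    | a + 1, b + 1 =>
      cases c with
      | zero =>
        rw [Pc_rec0]
        have H := ih (a + 1 + b) (by omega) (a + 1) b 1 rfl (by omega)
        have hp1 := Nat.choose_succ_succ (a + 1 + b) (b + 1)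
        have hp2 := Nat.choose_succ_succ (a + 1 + b) a
        simp only [Nat.succ_eq_add_one] at hp1 hp2
        have hs1 : (a + 1 + b).choose (b + 1) = (a + 1 + b).choose a := by
          rw [← Nat.choose_symm (show a ≤ a + 1 + b by omega)]
          congr 1
          omega
        rw [show a + 1 + (b + 1) = a + 1 + b + 1 by omega,
          show b + 1 + 0 + 1 = b + 1 + 1 by omega]
        omega
      | succ c' =>
        rw [Pc_recS]
        have H1 := ih (a + (b + 1)) (by omega) a (b + 1) c' rfl (by omega)
        have H2 := ih (a + 1 + b) (by omega) (a + 1) b (c' + 2) rfl (by omega)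
        rw [show a + (b + 1) = a + 1 + b by omega,
          show b + 1 + c' + 1 = b + c' + 2 by omega] at H1
        rw [show b + (c' + 2) + 1 = b + c' + 2 + 1 by omega] at H2
        have hp1 := Nat.choose_succ_succ (a + 1 + b) (b + c' + 2)
        have hp2 := Nat.choose_succ_succ (a + 1 + b) a
        simp only [Nat.succ_eq_add_one] at hp1 hp2
        rw [show a + 1 + (b + 1) = a + 1 + b + 1 by omega,
          show b + 1 + (c' + 1) + 1 = b + c' + 2 + 1 by omega]
        omega

lemma Pc_closed (a b c : ℕ) (h : a ≤ b + c) :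
    Pc a b c + (a + b).choose (b + c + 1) = (a + b).choose a :=
  Pc_closed' (a + b) a b c rfl h

lemma Mone_eq (a d e : ℕ) :
    Mone (a + d + e + 3) (a + 2) (a + 2 + d) =
      Pc a (a + 2 + d) 0 * Pc (d + e + 1) (e + 1) d := by
  rw [Mone]
  have hm : (a + (a + 2 + d)) + (2 + ((d + e + 1) + (e + 1))) =
      (a + d + e + 3) + (a + d + e + 3) := by omega
  rw [card_cast hm]
  refine (card_split _ (IsPathC a (a + 2 + d) 0)
      (fun g : Fin (2 + ((d + e + 1) + (e + 1))) → Bool =>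
        pref g 1 false = 1 ∧ pref g 2 false = 2 ∧
          IsPathC (d + e + 1) (e + 1) d (fun j => g (Fin.natAdd 2 j))) ?_).trans ?_
  · intro f
    simp only [IsPath, IsPathC, pref_cast]
    rw [show a + 2 + (a + 2 + d) - 2 = a + (a + 2 + d) by omega,
      show a + 2 + (a + 2 + d) - 1 = a + (a + 2 + d) + 1 by omega,
      show a + 2 + (a + 2 + d) = a + (a + 2 + d) + 2 by omega,
      show a + 2 - 2 = a by omega,
      show a + 2 - 1 = a + 1 by omega,
      show a + d + e + 3 + (a + d + e + 3) =
        a + (a + 2 + d) + (2 + ((d + e + 1) + (e + 1))) by omega]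
    have hL : ∀ v i, i ≤ a + (a + 2 + d) →
        pref (fun j : Fin (a + (a + 2 + d)) =>
          f (Fin.castAdd (2 + ((d + e + 1) + (e + 1))) j)) i v = pref f i v :=
      fun v i hi => pref_left f v i hi
    have hRf : ∀ i v, pref f (a + (a + 2 + d) + i) v =
        pref f (a + (a + 2 + d)) v +
          pref (fun j : Fin (2 + ((d + e + 1) + (e + 1))) =>
            f (Fin.natAdd (a + (a + 2 + d)) j)) i v :=
      fun i v => pref_right f v i
    have hR2 : ∀ i v,
        pref (fun j : Fin (2 + ((d + e + 1) + (e + 1))) =>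
          f (Fin.natAdd (a + (a + 2 + d)) j)) (2 + i) v =
        pref (fun j : Fin (2 + ((d + e + 1) + (e + 1))) =>
          f (Fin.natAdd (a + (a + 2 + d)) j)) 2 v +
        pref (fun j : Fin ((d + e + 1) + (e + 1)) =>
          f (Fin.natAdd (a + (a + 2 + d)) (Fin.natAdd 2 j))) i v :=
      fun i v => pref_right (fun j => f (Fin.natAdd (a + (a + 2 + d)) j)) v i
    constructor
    · rintro ⟨⟨hend, hbal⟩, h3, h4, h5⟩
      have hpt : pref f (a + (a + 2 + d)) true = a + 2 + d := by
        have := pref_add f (a + (a + 2 + d)) (by omega)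
        omega
      have hg1 : pref (fun j : Fin (2 + ((d + e + 1) + (e + 1))) =>
          f (Fin.natAdd (a + (a + 2 + d)) j)) 1 false = 1 := by
        have := hRf 1 false; omega
      have hg2 : pref (fun j : Fin (2 + ((d + e + 1) + (e + 1))) =>
          f (Fin.natAdd (a + (a + 2 + d)) j)) 2 false = 2 := by
        have := hRf 2 false; omega
      have hg2t : pref (fun j : Fin (2 + ((d + e + 1) + (e + 1))) =>
          f (Fin.natAdd (a + (a + 2 + d)) j)) 2 true = 0 := by
        have := pref_add (fun j : Fin (2 + ((d + e + 1) + (e + 1))) =>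
          f (Fin.natAdd (a + (a + 2 + d)) j)) 2 (by omega)
        omega
      refine ⟨⟨by rw [hL false _ le_rfl]; exact h3, ?_⟩, hg1, hg2, ?_, ?_⟩
      · intro i hi
        rw [hL false i hi, hL true i hi]
        have := hbal i (by omega)
        omega
      · rw [hRf (2 + ((d + e + 1) + (e + 1))) false,
          hR2 ((d + e + 1) + (e + 1)) false] at hend
        omega
      · intro i hi
        have hb := hbal (a + (a + 2 + d) + (2 + i)) (by omega)
        rw [hRf (2 + i) false, hRf (2 + i) true, hR2 i false, hR2 i true] at hb
        omega
    · rintro ⟨⟨hend1, hbal1⟩, hg1, hg2, hend2, hbal2⟩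
      have h3 : pref f (a + (a + 2 + d)) false = a := by
        rw [← hL false _ le_rfl]; exact hend1
      have hpt : pref f (a + (a + 2 + d)) true = a + 2 + d := by
        have := pref_add f (a + (a + 2 + d)) (by omega)
        omega
      have hg1t : pref (fun j : Fin (2 + ((d + e + 1) + (e + 1))) =>
          f (Fin.natAdd (a + (a + 2 + d)) j)) 1 true = 0 := by
        have := pref_add (fun j : Fin (2 + ((d + e + 1) + (e + 1))) =>
          f (Fin.natAdd (a + (a + 2 + d)) j)) 1 (by omega)
        omega
      have hg2t : pref (fun j : Fin (2 + ((d + e + 1) + (e + 1))) =>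
          f (Fin.natAdd (a + (a + 2 + d)) j)) 2 true = 0 := by
        have := pref_add (fun j : Fin (2 + ((d + e + 1) + (e + 1))) =>
          f (Fin.natAdd (a + (a + 2 + d)) j)) 2 (by omega)
        omega
      refine ⟨⟨?_, ?_⟩, h3, ?_, ?_⟩
      · rw [hRf (2 + ((d + e + 1) + (e + 1))) false,
          hR2 ((d + e + 1) + (e + 1)) false]
        omega
      · intro i hi
        by_cases hip : i ≤ a + (a + 2 + d)
        · have := hbal1 i hip
          rw [hL false i hip, hL true i hip] at this
          omega
        · by_cases hip1 : i = a + (a + 2 + d) + 1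
          · subst hip1
            rw [hRf 1 false, hRf 1 true]
            omega
          · obtain ⟨j, hj, rfl⟩ : ∃ j, j ≤ (d + e + 1) + (e + 1) ∧
                i = a + (a + 2 + d) + (2 + j) :=
              ⟨i - (a + (a + 2 + d)) - 2, by omega, by omega⟩
            rw [hRf (2 + j) false, hRf (2 + j) true, hR2 j false, hR2 j true]
            have := hbal2 j hj
            omega
      · rw [hRf 1 false]; omega
      · rw [hRf 2 false]; omega
  · have h2 : (univ.filter (fun g : Fin (2 + ((d + e + 1) + (e + 1))) → Bool =>
        pref g 1 false = 1 ∧ pref g 2 false = 2 ∧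
          IsPathC (d + e + 1) (e + 1) d (fun j => g (Fin.natAdd 2 j)))).card =
        Pc (d + e + 1) (e + 1) d := by
      refine (card_split _ (fun g2 : Fin 2 → Bool => pref g2 1 false = 1 ∧ pref g2 2 false = 2)
          (IsPathC (d + e + 1) (e + 1) d) ?_).trans ?_
      · intro g
        have hL2 : ∀ v i, i ≤ 2 → pref (fun j : Fin 2 =>
            g (Fin.castAdd ((d + e + 1) + (e + 1)) j)) i v = pref g i v :=
          fun v i hi => pref_left g v i hi
        constructor
        · rintro ⟨h1, h2', h3'⟩
          exact ⟨⟨by rw [hL2 false 1 (by omega)]; exact h1,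
            by rw [hL2 false 2 (by omega)]; exact h2'⟩, h3'⟩
        · rintro ⟨⟨h1, h2'⟩, h3'⟩
          rw [hL2 false 1 (by omega)] at h1
          rw [hL2 false 2 (by omega)] at h2'
          exact ⟨h1, h2', h3'⟩
      · have hc : (univ.filter (fun g2 : Fin 2 → Bool =>
            pref g2 1 false = 1 ∧ pref g2 2 false = 2)).card = 1 := by decide
        rw [hc, one_mul, Pc]
    rw [h2]
    rfl

lemma Mtwo_eq (a d e : ℕ) :
    Mtwo (a + d + e + 3) (a + 2) (a + 2 + d) =
      Pc (a + 1) (a + 1 + d) 0 * Pc (d + e + 2) e (d + 2) := by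
  rw [Mtwo]
  have hm : (a + 1 + (a + 1 + d)) + (2 + ((d + e + 2) + e)) =
      (a + d + e + 3) + (a + d + e + 3) := by omega
  rw [card_cast hm]
  refine (card_split _ (IsPathC (a + 1) (a + 1 + d) 0)
      (fun g : Fin (2 + ((d + e + 2) + e)) → Bool =>
        pref g 1 false = 0 ∧ pref g 2 false = 0 ∧
          IsPathC (d + e + 2) e (d + 2) (fun j => g (Fin.natAdd 2 j))) ?_).trans ?_
  · intro f
    simp only [IsPath, IsPathC, pref_cast]
    rw [show a + 2 + (a + 2 + d) - 2 = a + 1 + (a + 1 + d) by omega,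
      show a + 2 + (a + 2 + d) - 1 = a + 1 + (a + 1 + d) + 1 by omega,
      show a + 2 + (a + 2 + d) = a + 1 + (a + 1 + d) + 2 by omega,
      show a + 2 - 1 = a + 1 by omega,
      show a + d + e + 3 + (a + d + e + 3) =
        a + 1 + (a + 1 + d) + (2 + ((d + e + 2) + e)) by omega]
    have hL : ∀ v i, i ≤ a + 1 + (a + 1 + d) →
        pref (fun j : Fin (a + 1 + (a + 1 + d)) =>
          f (Fin.castAdd (2 + ((d + e + 2) + e)) j)) i v = pref f i v :=
      fun v i hi => pref_left f v i hi
    have hRf : ∀ i v, pref f (a + 1 + (a + 1 + d) + i) v =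
        pref f (a + 1 + (a + 1 + d)) v +
          pref (fun j : Fin (2 + ((d + e + 2) + e)) =>
            f (Fin.natAdd (a + 1 + (a + 1 + d)) j)) i v :=
      fun i v => pref_right f v i
    have hR2 : ∀ i v,
        pref (fun j : Fin (2 + ((d + e + 2) + e)) =>
          f (Fin.natAdd (a + 1 + (a + 1 + d)) j)) (2 + i) v =
        pref (fun j : Fin (2 + ((d + e + 2) + e)) =>
          f (Fin.natAdd (a + 1 + (a + 1 + d)) j)) 2 v +
        pref (fun j : Fin ((d + e + 2) + e) =>
          f (Fin.natAdd (a + 1 + (a + 1 + d)) (Fin.natAdd 2 j))) i v :=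
      fun i v => pref_right (fun j => f (Fin.natAdd (a + 1 + (a + 1 + d)) j)) v i
    constructor
    · rintro ⟨⟨hend, hbal⟩, h3, h4, h5⟩
      have hpt : pref f (a + 1 + (a + 1 + d)) true = a + 1 + d := by
        have := pref_add f (a + 1 + (a + 1 + d)) (by omega)
        omega
      have hg1 : pref (fun j : Fin (2 + ((d + e + 2) + e)) =>
          f (Fin.natAdd (a + 1 + (a + 1 + d)) j)) 1 false = 0 := by
        have := hRf 1 false; omega
      have hg2 : pref (fun j : Fin (2 + ((d + e + 2) + e)) =>
          f (Fin.natAdd (a + 1 + (a + 1 + d)) j)) 2 false = 0 := by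
        have := hRf 2 false; omega
      have hg2t : pref (fun j : Fin (2 + ((d + e + 2) + e)) =>
          f (Fin.natAdd (a + 1 + (a + 1 + d)) j)) 2 true = 2 := by
        have := pref_add (fun j : Fin (2 + ((d + e + 2) + e)) =>
          f (Fin.natAdd (a + 1 + (a + 1 + d)) j)) 2 (by omega)
        omega
      refine ⟨⟨by rw [hL false _ le_rfl]; exact h3, ?_⟩, hg1, hg2, ?_, ?_⟩
      · intro i hi
        rw [hL false i hi, hL true i hi]
        have := hbal i (by omega)
        omega
      · rw [hRf (2 + ((d + e + 2) + e)) false,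
          hR2 ((d + e + 2) + e) false] at hend
        omega
      · intro i hi
        have hb := hbal (a + 1 + (a + 1 + d) + (2 + i)) (by omega)
        rw [hRf (2 + i) false, hRf (2 + i) true, hR2 i false, hR2 i true] at hb
        omega
    · rintro ⟨⟨hend1, hbal1⟩, hg1, hg2, hend2, hbal2⟩
      have h3 : pref f (a + 1 + (a + 1 + d)) false = a + 1 := by
        rw [← hL false _ le_rfl]; exact hend1
      have hpt : pref f (a + 1 + (a + 1 + d)) true = a + 1 + d := by
        have := pref_add f (a + 1 + (a + 1 + d)) (by omega)
        omega
      have hg1t : pref (fun j : Fin (2 + ((d + e + 2) + e)) =>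
          f (Fin.natAdd (a + 1 + (a + 1 + d)) j)) 1 true = 1 := by
        have := pref_add (fun j : Fin (2 + ((d + e + 2) + e)) =>
          f (Fin.natAdd (a + 1 + (a + 1 + d)) j)) 1 (by omega)
        omega
      have hg2t : pref (fun j : Fin (2 + ((d + e + 2) + e)) =>
          f (Fin.natAdd (a + 1 + (a + 1 + d)) j)) 2 true = 2 := by
        have := pref_add (fun j : Fin (2 + ((d + e + 2) + e)) =>
          f (Fin.natAdd (a + 1 + (a + 1 + d)) j)) 2 (by omega)
        omega
      refine ⟨⟨?_, ?_⟩, h3, ?_, ?_⟩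
      · rw [hRf (2 + ((d + e + 2) + e)) false,
          hR2 ((d + e + 2) + e) false]
        omega
      · intro i hi
        by_cases hip : i ≤ a + 1 + (a + 1 + d)
        · have := hbal1 i hip
          rw [hL false i hip, hL true i hip] at this
          omega
        · by_cases hip1 : i = a + 1 + (a + 1 + d) + 1
          · subst hip1
            rw [hRf 1 false, hRf 1 true]
            omega
          · obtain ⟨j, hj, rfl⟩ : ∃ j, j ≤ (d + e + 2) + e ∧
                i = a + 1 + (a + 1 + d) + (2 + j) :=
              ⟨i - (a + 1 + (a + 1 + d)) - 2, by omega, by omega⟩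
            rw [hRf (2 + j) false, hRf (2 + j) true, hR2 j false, hR2 j true]
            have := hbal2 j hj
            omega
      · rw [hRf 1 false]; omega
      · rw [hRf 2 false]; omega
  · have h2 : (univ.filter (fun g : Fin (2 + ((d + e + 2) + e)) → Bool =>
        pref g 1 false = 0 ∧ pref g 2 false = 0 ∧
          IsPathC (d + e + 2) e (d + 2) (fun j => g (Fin.natAdd 2 j)))).card =
        Pc (d + e + 2) e (d + 2) := by
      refine (card_split _ (fun g2 : Fin 2 → Bool => pref g2 1 false = 0 ∧ pref g2 2 false = 0)
          (IsPathC (d + e + 2) e (d + 2)) ?_).trans ?_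
      · intro g
        have hL2 : ∀ v i, i ≤ 2 → pref (fun j : Fin 2 =>
            g (Fin.castAdd ((d + e + 2) + e) j)) i v = pref g i v :=
          fun v i hi => pref_left g v i hi
        constructor
        · rintro ⟨h1, h2', h3'⟩
          exact ⟨⟨by rw [hL2 false 1 (by omega)]; exact h1,
            by rw [hL2 false 2 (by omega)]; exact h2'⟩, h3'⟩
        · rintro ⟨⟨h1, h2'⟩, h3'⟩
          rw [hL2 false 1 (by omega)] at h1
          rw [hL2 false 2 (by omega)] at h2'
          exact ⟨h1, h2', h3'⟩
      · have hc : (univ.filter (fun g2 : Fin 2 → Bool =>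
            pref g2 1 false = 0 ∧ pref g2 2 false = 0)).card = 1 := by decide
        rw [hc, one_mul, Pc]
    rw [h2]
    rfl

set_option maxHeartbeats 1000000 in
/-- With `x = h+1-z`, `1 ≤ z ≤ h-1`, `1 ≤ h ≤ n-1`:
`M2 - M1 = C(x+h-2,x-1) C(2n-x-h,n-h-1) (h-x+1)(h-x+2)(h-x+3)(n-x-h+1) / (h(h+1)(n-h)(n-x+2))`. -/
theorem stmt4 (n h z x : ℕ) (hx : x = h + 1 - z) (hz : 1 ≤ z) (hzh : z ≤ h - 1)
    (hh : 1 ≤ h) (hhn : h ≤ n - 1) (hn : 1 ≤ n) :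
    (Mtwo n x h : ℚ) - (Mone n x h : ℚ) =
      ((x + h - 2).choose (x - 1) : ℚ) * ((2 * n - x - h).choose (n - h - 1) : ℚ) *
        (((h : ℚ) - x + 1) * ((h : ℚ) - x + 2) * ((h : ℚ) - x + 3) *
          ((n : ℚ) - x - h + 1)) /
        ((h : ℚ) * ((h : ℚ) + 1) * ((n : ℚ) - h) * ((n : ℚ) - x + 2)) := by
  obtain ⟨a, d, e, rfl, rfl, rfl⟩ : ∃ a d e, x = a + 2 ∧ h = a + 2 + d ∧ n = a + d + e + 3 :=
    ⟨x - 2, h - x, n - h - 1, by omega, by omega, by omega⟩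
  clear hx hz hzh hh hhn hn
  rw [Mone_eq, Mtwo_eq]
  -- nat binomial identities
  have hr1 := Nat.choose_succ_right_eq (2 * a + d + 2) a
  rw [show 2 * a + d + 2 - a = a + d + 2 by omega] at hr1
  have hr2 := Nat.choose_symm (show a + d + 2 ≤ 2 * a + d + 2 by omega)
  rw [show 2 * a + d + 2 - (a + d + 2) = a by omega] at hr2
  have hr3 := Nat.choose_succ_right_eq (2 * a + d + 2) (a + d + 2)
  rw [show 2 * a + d + 2 - (a + d + 2) = a by omega,
    show a + d + 2 + 1 = a + d + 3 by omega] at hr3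
  rw [hr2] at hr1
  -- hr1 : c(a+1)*(a+1) = c(a+d+2)*(a+d+2)
  have hs1 := Nat.choose_symm (show d + e + 1 ≤ d + 2 * e + 2 by omega)
  rw [show d + 2 * e + 2 - (d + e + 1) = e + 1 by omega] at hs1
  have hs1b := Nat.choose_succ_right_eq (d + 2 * e + 2) e
  rw [show d + 2 * e + 2 - e = d + e + 2 by omega] at hs1b
  rw [hs1] at hs1b
  -- hs1b : c(d+e+1)*(e+1) = c(e)*(d+e+2)
  have hs2 := Nat.choose_symm (show d + e + 2 ≤ d + 2 * e + 2 by omega)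
  rw [show d + 2 * e + 2 - (d + e + 2) = e by omega] at hs2
  have hs3 := Nat.choose_succ_right_eq (d + 2 * e + 2) (d + e + 2)
  rw [show d + 2 * e + 2 - (d + e + 2) = e by omega,
    show d + e + 2 + 1 = d + e + 3 by omega] at hs3
  rw [← hs2] at hs3
  -- hs3 : c(d+e+3)*(d+e+3) = c(e)*e
  -- rational versions
  have hne1 : ((a : ℚ) + d + 2) ≠ 0 := by positivity
  have hne2 : ((a : ℚ) + d + 3) ≠ 0 := by positivity
  have hne3 : ((e : ℚ) + 1) ≠ 0 := by positivity
  have hne4 : ((d : ℚ) + e + 3) ≠ 0 := by positivity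
  have hc4m : (((2 * a + d + 2).choose (a + d + 2) : ℕ) : ℚ) * ((a : ℚ) + d + 2) =
      (((2 * a + d + 2).choose (a + 1) : ℕ) : ℚ) * ((a : ℚ) + 1) := by
    exact_mod_cast hr1.symm
  have Hc4 : (((2 * a + d + 2).choose (a + d + 2) : ℕ) : ℚ) =
      (((2 * a + d + 2).choose (a + 1) : ℕ) : ℚ) * ((a : ℚ) + 1) / ((a : ℚ) + d + 2) := by
    rw [eq_div_iff hne1]
    exact hc4m
  have Hc1 : (((2 * a + d + 2).choose a : ℕ) : ℚ) =
      (((2 * a + d + 2).choose (a + 1) : ℕ) : ℚ) * ((a : ℚ) + 1) / ((a : ℚ) + d + 2) := by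
    rw [← Hc4]
    exact_mod_cast hr2
  have hr3q : (((2 * a + d + 2).choose (a + d + 3) : ℕ) : ℚ) * ((a : ℚ) + d + 3) =
      (((2 * a + d + 2).choose (a + d + 2) : ℕ) : ℚ) * (a : ℚ) := by
    exact_mod_cast hr3
  have Hc3 : (((2 * a + d + 2).choose (a + d + 3) : ℕ) : ℚ) =
      (((2 * a + d + 2).choose (a + 1) : ℕ) : ℚ) * ((a : ℚ) + 1) * (a : ℚ) /
        (((a : ℚ) + d + 2) * ((a : ℚ) + d + 3)) := by
    rw [eq_div_iff (by positivity)]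
    linear_combination ((a : ℚ) + d + 2) * hr3q + (a : ℚ) * hc4m
  have Hd1 : (((d + 2 * e + 2).choose (d + e + 1) : ℕ) : ℚ) =
      (((d + 2 * e + 2).choose e : ℕ) : ℚ) * ((d : ℚ) + e + 2) / ((e : ℚ) + 1) := by
    rw [eq_div_iff hne3]
    exact_mod_cast hs1b
  have Hd2 : (((d + 2 * e + 2).choose (d + e + 2) : ℕ) : ℚ) =
      (((d + 2 * e + 2).choose e : ℕ) : ℚ) := by
    exact_mod_cast hs2.symm
  have Hd3 : (((d + 2 * e + 2).choose (d + e + 3) : ℕ) : ℚ) =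
      (((d + 2 * e + 2).choose e : ℕ) : ℚ) * (e : ℚ) / ((d : ℚ) + e + 3) := by
    rw [eq_div_iff hne4]
    exact_mod_cast hs3
  -- Pc values
  have q1 := Pc_closed (a + 1) (a + 1 + d) 0 (by omega)
  rw [show (a + 1) + (a + 1 + d) = 2 * a + d + 2 by omega,
    show a + 1 + d + 0 + 1 = a + d + 2 by omega] at q1
  have q2 := Pc_closed (d + e + 2) e (d + 2) (by omega)
  rw [show (d + e + 2) + e = d + 2 * e + 2 by omega,
    show e + (d + 2) + 1 = d + e + 3 by omega] at q2
  have q3 := Pc_closed a (a + 2 + d) 0 (by omega)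
  rw [show a + (a + 2 + d) = 2 * a + d + 2 by omega,
    show a + 2 + d + 0 + 1 = a + d + 3 by omega] at q3
  have q4 := Pc_closed (d + e + 1) (e + 1) d (by omega)
  rw [show (d + e + 1) + (e + 1) = d + 2 * e + 2 by omega,
    show e + 1 + d + 1 = d + e + 2 by omega] at q4
  have hP21 : ((Pc (a + 1) (a + 1 + d) 0 : ℕ) : ℚ) =
      (((2 * a + d + 2).choose (a + 1) : ℕ) : ℚ) -
        (((2 * a + d + 2).choose (a + d + 2) : ℕ) : ℚ) := by
    have hq : ((Pc (a + 1) (a + 1 + d) 0 : ℕ) : ℚ) +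
        (((2 * a + d + 2).choose (a + d + 2) : ℕ) : ℚ) =
        (((2 * a + d + 2).choose (a + 1) : ℕ) : ℚ) := by exact_mod_cast q1
    linarith
  have hP22 : ((Pc (d + e + 2) e (d + 2) : ℕ) : ℚ) =
      (((d + 2 * e + 2).choose (d + e + 2) : ℕ) : ℚ) -
        (((d + 2 * e + 2).choose (d + e + 3) : ℕ) : ℚ) := by
    have hq : ((Pc (d + e + 2) e (d + 2) : ℕ) : ℚ) +
        (((d + 2 * e + 2).choose (d + e + 3) : ℕ) : ℚ) =
        (((d + 2 * e + 2).choose (d + e + 2) : ℕ) : ℚ) := by exact_mod_cast q2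
    linarith
  have hP11 : ((Pc a (a + 2 + d) 0 : ℕ) : ℚ) =
      (((2 * a + d + 2).choose a : ℕ) : ℚ) -
        (((2 * a + d + 2).choose (a + d + 3) : ℕ) : ℚ) := by
    have hq : ((Pc a (a + 2 + d) 0 : ℕ) : ℚ) +
        (((2 * a + d + 2).choose (a + d + 3) : ℕ) : ℚ) =
        (((2 * a + d + 2).choose a : ℕ) : ℚ) := by exact_mod_cast q3
    linarith
  have hP12 : ((Pc (d + e + 1) (e + 1) d : ℕ) : ℚ) =
      (((d + 2 * e + 2).choose (d + e + 1) : ℕ) : ℚ) -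
        (((d + 2 * e + 2).choose (d + e + 2) : ℕ) : ℚ) := by
    have hq : ((Pc (d + e + 1) (e + 1) d : ℕ) : ℚ) +
        (((d + 2 * e + 2).choose (d + e + 2) : ℕ) : ℚ) =
        (((d + 2 * e + 2).choose (d + e + 1) : ℕ) : ℚ) := by exact_mod_cast q4
    linarith
  -- normalize the RHS binomial indices
  rw [show a + 2 + (a + 2 + d) - 2 = 2 * a + d + 2 by omega,
    show a + 2 - 1 = a + 1 by omega,
    show 2 * (a + d + e + 3) - (a + 2) - (a + 2 + d) = d + 2 * e + 2 by omega,
    show a + d + e + 3 - (a + 2 + d) - 1 = e by omega]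
  push_cast
  rw [hP21, hP22, hP11, hP12, Hc4, Hc1, Hc3, Hd1, Hd2, Hd3]
  clear hr1 hr2 hr3 hs1 hs1b hs2 hs3 hc4m Hc4 Hc1 hr3q Hc3 Hd1 Hd2 Hd3 q1 q2 q3 q4 hP21 hP22 hP11 hP12
  rw [show (a:ℚ) + 2 + ↑d - (↑a + 2) + 1 = (d:ℚ) + 1 by ring,
    show (a:ℚ) + 2 + ↑d - (↑a + 2) + 2 = (d:ℚ) + 2 by ring,
    show (a:ℚ) + 2 + ↑d - (↑a + 2) + 3 = (d:ℚ) + 3 by ring,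
    show (a:ℚ) + ↑d + ↑e + 3 - (↑a + 2) - (↑a + 2 + ↑d) + 1 = (e:ℚ) - ↑a by ring,
    show (a:ℚ) + ↑d + ↑e + 3 - (↑a + 2 + ↑d) = (e:ℚ) + 1 by ring,
    show (a:ℚ) + ↑d + ↑e + 3 - (↑a + 2) + 2 = (d:ℚ) + ↑e + 3 by ring]
  have hne5 : ((a:ℚ) + 2 + ↑d) ≠ 0 := by positivity
  have hne6 : ((a:ℚ) + 2 + ↑d + 1) ≠ 0 := by positivity
  generalize (((2 * a + d + 2).choose (a + 1) : ℕ) : ℚ) = A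
  generalize (((d + 2 * e + 2).choose e : ℕ) : ℚ) = B
  field_simp
  ring
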